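/- Let q ≥ 3 be an odd integer. Then in ℤ[t] the following identity holds: Ψ_3(t) Ψ_q(t) Φ_6(t^{q−1}) = Ψ_{3q}(t) + t(1−t)² Ψ_2(t) Ψ_{q−2}(t) Ψ_{q−1}(t) Ψ_q(t). -/

import Mathlib

open Polynomial

/-- `Ψ_m(t) = 1 + t + ⋯ + t^{m-1} ∈ ℤ[t]`. -/
noncomputable def Psi (m : ℕ) : Polynomial ℤ :=
  ∑ i ∈ Finset.range m, Polynomial.X ^ i

/-- A polynomial is of type CI if it is a (possibly empty) product `Ψ_{m_1} ⋯ Ψ_{m_r}`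
with all `m_i` positive. -/
def IsTypeCI (f : Polynomial ℤ) : Prop :=
  ∃ l : List ℕ, (∀ m ∈ l, 0 < m) ∧ f = (l.map Psi).prod

/-- All complex roots of the integer polynomial `h` lie on the unit circle. -/
def RootsOnUnitCircle (h : Polynomial ℤ) : Prop :=
  ∀ z : ℂ, Polynomial.aeval z h = 0 → ‖z‖ = 1

lemma cyc6 : Polynomial.cyclotomic 6 ℤ = X ^ 2 - X + 1 := by
  have h := prod_cyclotomic_eq_X_pow_sub_one (by norm_num : 0 < 6) ℤ
  have hd : Nat.divisors 6 = {1, 2, 3, 6} := by decide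
  rw [hd] at h
  simp [Finset.prod_insert, cyclotomic_one, cyclotomic_two, cyclotomic_three] at h
  have hf : ((X : ℤ[X]) - 1) * (X + 1) * (X ^ 2 + X + 1) ≠ 0 := by
    intro hzero
    have := congrArg (Polynomial.eval 2) hzero
    simp at this
  apply mul_left_cancel₀ hf
  rw [show ((X:ℤ[X]) - 1) * (X + 1) * (X ^ 2 + X + 1) * cyclotomic 6 ℤ
      = (X - 1) * ((X + 1) * ((X ^ 2 + X + 1) * cyclotomic 6 ℤ)) by ring, cyclotomic_six]
  ring

/-- For odd `q ≥ 3`: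
`Ψ_3 Ψ_q Φ_6(t^{q-1}) = Ψ_{3q} + t(1-t)² Ψ_2 Ψ_{q-2} Ψ_{q-1} Ψ_q`. -/
theorem psi_identity_three (q : ℕ) (hq : Odd q) (h3 : 3 ≤ q) :
    Psi 3 * Psi q * (Polynomial.cyclotomic 6 ℤ).comp (Polynomial.X ^ (q - 1)) =
      Psi (3 * q) + Polynomial.X * (1 - Polynomial.X) ^ 2 *
        Psi 2 * Psi (q - 2) * Psi (q - 1) * Psi q := by
  have hpsi : ∀ m : ℕ, Psi m * (X - 1) = (X : ℤ[X]) ^ m - 1 := fun m => geom_sum_mul X m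
  obtain ⟨j, rfl⟩ : ∃ j, q = 2 * j + 3 := by
    rw [Nat.odd_iff] at hq; exact ⟨(q - 3) / 2, by omega⟩
  rw [show 2 * j + 3 - 1 = 2 * j + 2 by omega, show 2 * j + 3 - 2 = 2 * j + 1 by omega,
    show 3 * (2 * j + 3) = 6 * j + 9 by ring]
  have A3 := hpsi 3
  have A2 := hpsi 2
  have Aq : Psi (2 * j + 3) * (X - 1) = ((X : ℤ[X]) ^ j) ^ 2 * X ^ 3 - 1 := by
    rw [hpsi, show 2 * j + 3 = j * 2 + 3 by ring, pow_add, pow_mul]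
  have Aq1 : Psi (2 * j + 2) * (X - 1) = ((X : ℤ[X]) ^ j) ^ 2 * X ^ 2 - 1 := by
    rw [hpsi, show 2 * j + 2 = j * 2 + 2 by ring, pow_add, pow_mul]
  have Aq2 : Psi (2 * j + 1) * (X - 1) = ((X : ℤ[X]) ^ j) ^ 2 * X - 1 := by
    rw [hpsi, show 2 * j + 1 = j * 2 + 1 by ring, pow_add, pow_mul, pow_one]
  have A3q : Psi (6 * j + 9) * (X - 1) = ((X : ℤ[X]) ^ j) ^ 6 * X ^ 9 - 1 := by
    rw [hpsi, show 6 * j + 9 = j * 6 + 9 by ring, pow_add, pow_mul]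
  have hc : (cyclotomic 6 ℤ).comp (X ^ (2 * j + 2))
      = 1 - ((X : ℤ[X]) ^ j) ^ 2 * X ^ 2 + ((X : ℤ[X]) ^ j) ^ 4 * X ^ 4 := by
    rw [cyc6]
    simp only [sub_comp, add_comp, pow_comp, X_comp, one_comp]
    rw [show ((X : ℤ[X]) ^ (2 * j + 2)) ^ 2 = ((X : ℤ[X]) ^ j) ^ 4 * X ^ 4 by
        rw [← pow_mul, ← pow_mul, ← pow_add]; congr 1; ring,
      show ((X : ℤ[X]) ^ (2 * j + 2)) = ((X : ℤ[X]) ^ j) ^ 2 * X ^ 2 by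
        rw [← pow_mul, ← pow_add]; congr 1; ring]
    ring
  have hXne : ((X : ℤ[X]) - 1) ≠ 0 := by
    intro h
    have := congrArg (Polynomial.eval 2) h
    simp at this
  apply mul_right_cancel₀ (pow_ne_zero 4 hXne)
  rw [hc]
  linear_combination
    (Psi (2 * j + 3) * (1 - ((X:ℤ[X])^j)^2*X^2 + ((X:ℤ[X])^j)^4*X^4) * (X - 1)^3) * A3
    + (((X:ℤ[X])^3 - 1) * (1 - ((X:ℤ[X])^j)^2*X^2 + ((X:ℤ[X])^j)^4*X^4) * (X - 1)^2) * Aq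
    - (X - 1)^3 * A3q
    - (X * (1 - X)^2 * Psi (2*j+1) * Psi (2*j+2) * Psi (2*j+3) * (X - 1)^3) * A2
    - (X * (1 - X)^2 * ((X:ℤ[X])^2 - 1) * Psi (2*j+2) * Psi (2*j+3) * (X - 1)^2) * Aq2
    - (X * (1 - X)^2 * ((X:ℤ[X])^2 - 1) * (((X:ℤ[X])^j)^2*X - 1) * Psi (2*j+3) * (X - 1)) * Aq1
    - (X * (1 - X)^2 * ((X:ℤ[X])^2 - 1) * (((X:ℤ[X])^j)^2*X - 1) * (((X:ℤ[X])^j)^2*X^2 - 1)) * Aq
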